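/- For an arbitrary complex-valued function f ∈ L¹(a, b), where −∞ < a < b < ∞ and d = max(|a|, |b|), one has lim_{|λ| → ∞} e^{−|Im λ| d} ∫_a^b f(x) cos(λx) dx = 0 and lim_{|λ| → ∞} e^{−|Im λ| d} ∫_a^b f(x) sin(λx) dx = 0, where the limits are taken as λ ∈ ℂ tends to infinity in modulus. -/

import Mathlib

open MeasureTheory Filter Set

namespace Stmt5Aux

lemma norm_exp_bound {a b : ℝ} (lam : ℂ) {x : ℝ} (hx : x ∈ Set.Icc a b) :
    ‖Complex.exp (Complex.I * lam * x)‖ ≤ Real.exp (|lam.im| * max |a| |b|) := by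
  rw [Complex.norm_exp]
  apply Real.exp_le_exp.2
  have h1 : (Complex.I * lam * x).re = -lam.im * x := by
    simp [Complex.mul_re, Complex.mul_im]
  rw [h1]
  calc -lam.im * x ≤ |(-lam.im) * x| := le_abs_self _
    _ = |lam.im| * |x| := by rw [abs_mul, abs_neg]
    _ ≤ |lam.im| * max |a| |b| :=
        mul_le_mul_of_nonneg_left (abs_le_max_abs_abs hx.1 hx.2) (abs_nonneg _)

lemma integrable_mul_exp {a b : ℝ} {f : ℝ → ℂ} (hf : IntegrableOn f (Set.Ioc a b))
    (hab : a ≤ b) (c : ℂ) :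
    IntervalIntegrable (fun x => f x * Complex.exp (c * x)) volume a b := by
  apply IntervalIntegrable.mul_continuousOn
  · exact (intervalIntegrable_iff_integrableOn_Ioc_of_le hab).2 hf
  · exact (Complex.continuous_exp.comp (continuous_const.mul Complex.continuous_ofReal)).continuousOn

lemma compare {a b : ℝ} (hab : a ≤ b) (f g : ℝ → ℂ) (hf : IntegrableOn f (Set.Ioc a b))
    (hg : IntegrableOn g (Set.Ioc a b)) (lam : ℂ) :
    Real.exp (-|lam.im| * max |a| |b|) *
        ‖∫ x in a..b, f x * Complex.exp (Complex.I * lam * x)‖ ≤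
      (∫ x in Set.Ioc a b, ‖f x - g x‖) +
        Real.exp (-|lam.im| * max |a| |b|) *
          ‖∫ x in a..b, g x * Complex.exp (Complex.I * lam * x)‖ := by
  set d := max |a| |b| with hd
  set c := Complex.I * lam with hc
  have hfi := integrable_mul_exp hf hab c
  have hgi := integrable_mul_exp hg hab c
  have hfgi : IntervalIntegrable (fun x => (f x - g x) * Complex.exp (c * ↑x)) volume a b :=
    integrable_mul_exp (hf.sub hg) hab c
  have hEpos : (0:ℝ) < Real.exp (-|lam.im| * d) := Real.exp_pos _
  have hsplit : (∫ x in a..b, f x * Complex.exp (c * x)) =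
      (∫ x in a..b, (f x - g x) * Complex.exp (c * x)) +
        ∫ x in a..b, g x * Complex.exp (c * x) := by
    rw [← intervalIntegral.integral_add hfgi hgi]
    apply intervalIntegral.integral_congr
    intro x _
    ring
  have h2 : ‖∫ x in a..b, (f x - g x) * Complex.exp (c * x)‖ ≤
      (∫ x in Set.Ioc a b, ‖f x - g x‖) * Real.exp (|lam.im| * d) := by
    calc ‖∫ x in a..b, (f x - g x) * Complex.exp (c * x)‖
        ≤ ∫ x in a..b, ‖(f x - g x) * Complex.exp (c * x)‖ :=
          intervalIntegral.norm_integral_le_integral_norm hab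
      _ = ∫ x in Set.Ioc a b, ‖(f x - g x) * Complex.exp (c * x)‖ :=
          intervalIntegral.integral_of_le hab
      _ ≤ ∫ x in Set.Ioc a b, ‖f x - g x‖ * Real.exp (|lam.im| * d) := by
          apply setIntegral_mono_on
          · exact ((intervalIntegrable_iff_integrableOn_Ioc_of_le hab).1 hfgi).norm
          · exact ((hf.sub hg).norm).mul_const _
          · exact measurableSet_Ioc
          · intro x hx
            rw [norm_mul]
            exact mul_le_mul_of_nonneg_left (norm_exp_bound lam (Set.Ioc_subset_Icc_self hx))
              (norm_nonneg _)
      _ = (∫ x in Set.Ioc a b, ‖f x - g x‖) * Real.exp (|lam.im| * d) := by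
          rw [integral_mul_const]
  have hone : Real.exp (-|lam.im| * d) * Real.exp (|lam.im| * d) = 1 := by
    rw [← Real.exp_add, neg_mul, neg_add_cancel, Real.exp_zero]
  calc Real.exp (-|lam.im| * d) * ‖∫ x in a..b, f x * Complex.exp (c * x)‖
      ≤ Real.exp (-|lam.im| * d) *
          (‖∫ x in a..b, (f x - g x) * Complex.exp (c * x)‖ +
            ‖∫ x in a..b, g x * Complex.exp (c * x)‖) := by
        apply mul_le_mul_of_nonneg_left _ hEpos.le
        rw [hsplit]
        exact norm_add_le _ _
    _ ≤ Real.exp (-|lam.im| * d) *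
          ((∫ x in Set.Ioc a b, ‖f x - g x‖) * Real.exp (|lam.im| * d) +
            ‖∫ x in a..b, g x * Complex.exp (c * x)‖) := by
        apply mul_le_mul_of_nonneg_left _ hEpos.le
        exact add_le_add h2 le_rfl
    _ = (∫ x in Set.Ioc a b, ‖f x - g x‖) *
          (Real.exp (-|lam.im| * d) * Real.exp (|lam.im| * d)) +
          Real.exp (-|lam.im| * d) * ‖∫ x in a..b, g x * Complex.exp (c * x)‖ := by ring
    _ = (∫ x in Set.Ioc a b, ‖f x - g x‖) +
          Real.exp (-|lam.im| * d) * ‖∫ x in a..b, g x * Complex.exp (c * x)‖ := by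
        rw [hone, mul_one]

lemma decay {a b : ℝ} (hab : a ≤ b) (u u' : ℝ → ℂ) (hu : ∀ x : ℝ, HasDerivAt u (u' x) x)
    (hcu' : Continuous u') (lam : ℂ) (hlam : lam ≠ 0) :
    Real.exp (-|lam.im| * max |a| |b|) *
        ‖∫ x in a..b, u x * Complex.exp (Complex.I * lam * x)‖ ≤
      (‖u a‖ + ‖u b‖ + ∫ x in Set.Ioc a b, ‖u' x‖) / ‖lam‖ := by
  set d := max |a| |b| with hd
  set c := Complex.I * lam with hc
  have hc0 : c ≠ 0 := mul_ne_zero Complex.I_ne_zero hlam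
  have hnc : ‖c‖ = ‖lam‖ := by
    rw [hc, norm_mul, Complex.norm_I, one_mul]
  have hlampos : (0:ℝ) < ‖lam‖ := norm_pos_iff.2 hlam
  set v : ℝ → ℂ := fun x => Complex.exp (c * x) / c with hv
  have hvd : ∀ x : ℝ, HasDerivAt v (Complex.exp (c * x)) x := by
    intro x
    have h0 : HasDerivAt (fun z : ℂ => c * z) c (x : ℂ) := by
      simpa using (hasDerivAt_id (x : ℂ)).const_mul c
    have h1 : HasDerivAt (fun z : ℂ => Complex.exp (c * z)) (Complex.exp (c * x) * c) (x : ℂ) :=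
      (Complex.hasDerivAt_exp (c * x)).comp (x : ℂ) h0
    have h2 := (h1.comp_ofReal).div_const c
    simpa [mul_div_cancel_right₀ _ hc0] using h2
  have hcont_exp : Continuous fun x : ℝ => Complex.exp (c * x) :=
    Complex.continuous_exp.comp (continuous_const.mul Complex.continuous_ofReal)
  have hcontv : Continuous v := hcont_exp.div_const c
  have hibp := intervalIntegral.integral_mul_deriv_eq_deriv_mul
    (fun x _ => hu x) (fun x _ => hvd x)
    (hcu'.intervalIntegrable a b) (hcont_exp.intervalIntegrable a b)
  have hvbound : ∀ x ∈ Set.Icc a b, ‖v x‖ ≤ Real.exp (|lam.im| * d) / ‖lam‖ := by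
    intro x hx
    rw [hv]
    simp only [norm_div, hnc]
    gcongr
    exact norm_exp_bound lam hx
  have hterm : ‖∫ x in a..b, u' x * v x‖ ≤
      (∫ x in Set.Ioc a b, ‖u' x‖) * (Real.exp (|lam.im| * d) / ‖lam‖) := by
    calc ‖∫ x in a..b, u' x * v x‖ ≤ ∫ x in a..b, ‖u' x * v x‖ :=
          intervalIntegral.norm_integral_le_integral_norm hab
      _ = ∫ x in Set.Ioc a b, ‖u' x * v x‖ := intervalIntegral.integral_of_le hab
      _ ≤ ∫ x in Set.Ioc a b, ‖u' x‖ * (Real.exp (|lam.im| * d) / ‖lam‖) := by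
          apply setIntegral_mono_on
          · exact ((hcu'.mul hcontv).norm).integrableOn_Ioc
          · exact ((hcu'.norm).mul continuous_const).integrableOn_Ioc
          · exact measurableSet_Ioc
          · intro x hx
            rw [norm_mul]
            exact mul_le_mul_of_nonneg_left (hvbound x (Set.Ioc_subset_Icc_self hx))
              (norm_nonneg _)
      _ = (∫ x in Set.Ioc a b, ‖u' x‖) * (Real.exp (|lam.im| * d) / ‖lam‖) := by
          rw [integral_mul_const]
  have hmain : ‖∫ x in a..b, u x * Complex.exp (c * x)‖ ≤
      (‖u a‖ + ‖u b‖ + ∫ x in Set.Ioc a b, ‖u' x‖) * (Real.exp (|lam.im| * d) / ‖lam‖) := by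
    rw [hibp]
    calc ‖u b * v b - u a * v a - ∫ x in a..b, u' x * v x‖
        ≤ ‖u b * v b - u a * v a‖ + ‖∫ x in a..b, u' x * v x‖ := norm_sub_le _ _
      _ ≤ (‖u b * v b‖ + ‖u a * v a‖) + ‖∫ x in a..b, u' x * v x‖ := by
          gcongr
          exact norm_sub_le _ _
      _ ≤ (‖u b‖ * (Real.exp (|lam.im| * d) / ‖lam‖) +
            ‖u a‖ * (Real.exp (|lam.im| * d) / ‖lam‖)) +
            (∫ x in Set.Ioc a b, ‖u' x‖) * (Real.exp (|lam.im| * d) / ‖lam‖) := by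
          apply add_le_add _ hterm
          apply add_le_add
          · rw [norm_mul]
            exact mul_le_mul_of_nonneg_left (hvbound b (Set.right_mem_Icc.2 hab)) (norm_nonneg _)
          · rw [norm_mul]
            exact mul_le_mul_of_nonneg_left (hvbound a (Set.left_mem_Icc.2 hab)) (norm_nonneg _)
      _ = (‖u a‖ + ‖u b‖ + ∫ x in Set.Ioc a b, ‖u' x‖) *
            (Real.exp (|lam.im| * d) / ‖lam‖) := by ring
  have hone : Real.exp (-|lam.im| * d) * Real.exp (|lam.im| * d) = 1 := by
    rw [← Real.exp_add, neg_mul, neg_add_cancel, Real.exp_zero]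
  calc Real.exp (-|lam.im| * d) * ‖∫ x in a..b, u x * Complex.exp (c * x)‖
      ≤ Real.exp (-|lam.im| * d) *
          ((‖u a‖ + ‖u b‖ + ∫ x in Set.Ioc a b, ‖u' x‖) *
            (Real.exp (|lam.im| * d) / ‖lam‖)) :=
        mul_le_mul_of_nonneg_left hmain (Real.exp_pos _).le
    _ = (‖u a‖ + ‖u b‖ + ∫ x in Set.Ioc a b, ‖u' x‖) *
          (Real.exp (-|lam.im| * d) * Real.exp (|lam.im| * d)) / ‖lam‖ := by ring
    _ = (‖u a‖ + ‖u b‖ + ∫ x in Set.Ioc a b, ‖u' x‖) / ‖lam‖ := by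
        rw [hone, mul_one]

lemma key {a b : ℝ} (hab : a < b) (f : ℝ → ℂ) (hf : IntegrableOn f (Set.Ioc a b)) :
    Tendsto (fun lam : ℂ => Real.exp (-|lam.im| * max |a| |b|) *
      ‖∫ x in a..b, f x * Complex.exp (Complex.I * lam * x)‖) (cocompact ℂ) (nhds 0) := by
  rw [Metric.tendsto_nhds]
  intro ε hε
  -- Step 1: continuous approximation
  have hind : Integrable (Set.indicator (Set.Ioc a b) f) volume :=
    hf.integrable_indicator measurableSet_Ioc
  obtain ⟨g, -, hgclose, hgcont, hgint⟩ :=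
    hind.exists_hasCompactSupport_integral_sub_le (show (0:ℝ) < ε/4 by positivity)
  -- Step 2: polynomial approximation of g on [a, b]
  have hδ : (0:ℝ) < ε / (8 * (b - a)) := by
    apply div_pos hε
    have : (0:ℝ) < b - a := by linarith
    linarith
  obtain ⟨p, hp⟩ := exists_polynomial_near_of_continuousOn a b (fun x => (g x).re)
    ((Complex.continuous_re.comp hgcont).continuousOn) _ hδ
  obtain ⟨q, hq⟩ := exists_polynomial_near_of_continuousOn a b (fun x => (g x).im)
    ((Complex.continuous_im.comp hgcont).continuousOn) _ hδ
  set u : ℝ → ℂ := fun x => ((p.eval x : ℝ) : ℂ) + ((q.eval x : ℝ) : ℂ) * Complex.I with hu_def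
  set u' : ℝ → ℂ := fun x =>
    ((p.derivative.eval x : ℝ) : ℂ) + ((q.derivative.eval x : ℝ) : ℂ) * Complex.I with hu'_def
  have hu : ∀ x : ℝ, HasDerivAt u (u' x) x := fun x =>
    ((p.hasDerivAt x).ofReal_comp).add (((q.hasDerivAt x).ofReal_comp).mul_const Complex.I)
  have hu'c : Continuous u' :=
    (Complex.continuous_ofReal.comp p.derivative.continuous).add
      ((Complex.continuous_ofReal.comp q.derivative.continuous).mul continuous_const)
  have huc : Continuous u :=
    (Complex.continuous_ofReal.comp p.continuous).add
      ((Complex.continuous_ofReal.comp q.continuous).mul continuous_const)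
  have huint : IntegrableOn u (Set.Ioc a b) := huc.integrableOn_Ioc
  -- Step 3: f is L¹-close to u on (a, b]
  have hgu : ∀ x ∈ Set.Ioc a b, ‖g x - u x‖ ≤ 2 * (ε / (8 * (b - a))) := by
    intro x hx
    have hx' : x ∈ Set.Icc a b := Set.Ioc_subset_Icc_self hx
    have hre := (hp x hx').le
    have him := (hq x hx').le
    have hdecomp : g x - u x = (((g x).re - p.eval x : ℝ) : ℂ) +
        (((g x).im - q.eval x : ℝ) : ℂ) * Complex.I := by
      simp [Complex.ext_iff, hu_def]
    rw [hdecomp]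
    calc ‖(((g x).re - p.eval x : ℝ) : ℂ) + (((g x).im - q.eval x : ℝ) : ℂ) * Complex.I‖
        ≤ ‖(((g x).re - p.eval x : ℝ) : ℂ)‖ + ‖(((g x).im - q.eval x : ℝ) : ℂ) * Complex.I‖ :=
          norm_add_le _ _
      _ = |(g x).re - p.eval x| + |(g x).im - q.eval x| := by
          rw [norm_mul, Complex.norm_I, mul_one, Complex.norm_real, Complex.norm_real,
            Real.norm_eq_abs, Real.norm_eq_abs]
      _ ≤ ε / (8 * (b - a)) + ε / (8 * (b - a)) := by
          rw [abs_sub_comm ((g x).re), abs_sub_comm ((g x).im)]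
          exact add_le_add hre him
      _ = 2 * (ε / (8 * (b - a))) := by ring
  have hclose : (∫ x in Set.Ioc a b, ‖f x - u x‖) ≤ ε / 2 := by
    have hfg_int : IntegrableOn (fun x => ‖f x - g x‖) (Set.Ioc a b) :=
      (hf.sub hgcont.integrableOn_Ioc).norm
    have hgu_int : IntegrableOn (fun x => ‖g x - u x‖) (Set.Ioc a b) :=
      (hgcont.sub huc).norm.integrableOn_Ioc
    have h1 : (∫ x in Set.Ioc a b, ‖f x - u x‖) ≤
        (∫ x in Set.Ioc a b, ‖f x - g x‖) + ∫ x in Set.Ioc a b, ‖g x - u x‖ := by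
      rw [← integral_add hfg_int hgu_int]
      apply setIntegral_mono_on ((hf.sub huint).norm) (hfg_int.add hgu_int) measurableSet_Ioc
      intro x _
      calc ‖f x - u x‖ = ‖(f x - g x) + (g x - u x)‖ := by ring_nf
        _ ≤ ‖f x - g x‖ + ‖g x - u x‖ := norm_add_le _ _
    have h2 : (∫ x in Set.Ioc a b, ‖f x - g x‖) ≤ ε / 4 := by
      have heq : (∫ x in Set.Ioc a b, ‖f x - g x‖) =
          ∫ x in Set.Ioc a b, ‖Set.indicator (Set.Ioc a b) f x - g x‖ := by
        apply setIntegral_congr_fun measurableSet_Ioc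
        intro x hx
        simp [Set.indicator_of_mem hx]
      rw [heq]
      refine le_trans (setIntegral_le_integral (hind.sub hgint).norm ?_) hgclose
      exact Eventually.of_forall fun x => norm_nonneg _
    have h3 : (∫ x in Set.Ioc a b, ‖g x - u x‖) ≤ ε / 4 := by
      have hconst : (∫ x in Set.Ioc a b, (2 * (ε / (8 * (b - a))) : ℝ)) =
          2 * (ε / (8 * (b - a))) * (b - a) := by
        rw [setIntegral_const]
        rw [measureReal_def, Real.volume_Ioc, ENNReal.toReal_ofReal (by linarith : (0:ℝ) ≤ b - a), smul_eq_mul]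
        ring
      have := setIntegral_mono_on hgu_int
        (integrableOn_const measure_Ioc_lt_top.ne) measurableSet_Ioc hgu
      rw [hconst] at this
      have hba : (0:ℝ) < b - a := by linarith
      calc (∫ x in Set.Ioc a b, ‖g x - u x‖) ≤ 2 * (ε / (8 * (b - a))) * (b - a) := this
        _ = ε / 4 := by field_simp; ring
    linarith
  -- Step 4: conclusion
  set C := ‖u a‖ + ‖u b‖ + ∫ x in Set.Ioc a b, ‖u' x‖ with hC_def
  have hC : 0 ≤ C := by
    have : (0:ℝ) ≤ ∫ x in Set.Ioc a b, ‖u' x‖ := integral_nonneg fun x => norm_nonneg _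
    positivity
  have hev : ∀ᶠ lam : ℂ in cocompact ℂ, max 1 (2 * (C + 1) / ε) ≤ ‖lam‖ :=
    tendsto_norm_cocompact_atTop.eventually_ge_atTop _
  filter_upwards [hev] with lam hlam
  have hlam1 : (1:ℝ) ≤ ‖lam‖ := le_trans (le_max_left _ _) hlam
  have hlam0 : lam ≠ 0 := by
    intro h
    rw [h, norm_zero] at hlam1
    linarith
  have hlampos : (0:ℝ) < ‖lam‖ := by linarith
  have hnonneg : 0 ≤ Real.exp (-|lam.im| * max |a| |b|) *
      ‖∫ x in a..b, f x * Complex.exp (Complex.I * lam * x)‖ :=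
    mul_nonneg (Real.exp_pos _).le (norm_nonneg _)
  rw [Real.dist_eq, sub_zero, abs_of_nonneg hnonneg]
  have hcmp := compare hab.le f u hf huint lam
  have hdec := decay hab.le u u' hu hu'c lam hlam0
  have hCbound : C / ‖lam‖ < ε / 2 := by
    have h2 : 2 * (C + 1) / ε ≤ ‖lam‖ := le_trans (le_max_right _ _) hlam
    rw [div_le_iff₀ hε] at h2
    rw [div_lt_iff₀ hlampos]
    nlinarith
  calc Real.exp (-|lam.im| * max |a| |b|) *
        ‖∫ x in a..b, f x * Complex.exp (Complex.I * lam * x)‖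
      ≤ (∫ x in Set.Ioc a b, ‖f x - u x‖) +
          Real.exp (-|lam.im| * max |a| |b|) *
            ‖∫ x in a..b, u x * Complex.exp (Complex.I * lam * x)‖ := hcmp
    _ ≤ ε / 2 + C / ‖lam‖ := add_le_add hclose hdec
    _ < ε / 2 + ε / 2 := by linarith
    _ = ε := by ring

end Stmt5Aux

/-- Riemann–Lebesgue lemma with a complex parameter. For
`f ∈ L¹(a, b)` and `d = max(|a|, |b|)`, both
`e^{-|Im λ| d} ∫_a^b f(x) cos(λx) dx` and `e^{-|Im λ| d} ∫_a^b f(x) sin(λx) dx`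
tend to `0` as `|λ| → ∞` in `ℂ`. -/
theorem stmt_5 (a b : ℝ) (hab : a < b) (f : ℝ → ℂ) (hf : IntegrableOn f (Ioc a b)) :
    Tendsto (fun lam : ℂ =>
        Real.exp (-|lam.im| * max |a| |b|) *
          ‖∫ x in a..b, f x * Complex.cos (lam * x)‖)
      (cocompact ℂ) (nhds 0) ∧
    Tendsto (fun lam : ℂ =>
        Real.exp (-|lam.im| * max |a| |b|) *
          ‖∫ x in a..b, f x * Complex.sin (lam * x)‖)
      (cocompact ℂ) (nhds 0) := by
  have hkey := Stmt5Aux.key hab f hf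
  have hneg : Tendsto (fun z : ℂ => -z) (cocompact ℂ) (cocompact ℂ) := by
    have h : Tendsto (⇑(Homeomorph.neg ℂ)) (cocompact ℂ)
        (Filter.map (⇑(Homeomorph.neg ℂ)) (cocompact ℂ)) := tendsto_map
    rwa [Homeomorph.map_cocompact] at h
  have hkeyneg : Tendsto (fun lam : ℂ => Real.exp (-|lam.im| * max |a| |b|) *
      ‖∫ x in a..b, f x * Complex.exp (Complex.I * (-lam) * x)‖) (cocompact ℂ) (nhds 0) := by
    have h := hkey.comp hneg
    simp only [Function.comp_def, Complex.neg_im, abs_neg] at h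
    exact h
  have hsum : Tendsto (fun lam : ℂ =>
      (Real.exp (-|lam.im| * max |a| |b|) *
          ‖∫ x in a..b, f x * Complex.exp (Complex.I * lam * x)‖ +
        Real.exp (-|lam.im| * max |a| |b|) *
          ‖∫ x in a..b, f x * Complex.exp (Complex.I * (-lam) * x)‖) / 2)
      (cocompact ℂ) (nhds 0) := by
    have h := (hkey.add hkeyneg).div_const 2
    simpa using h
  have h2 : ‖(2:ℂ)‖ = 2 := by simp
  constructor
  · refine squeeze_zero (fun lam => mul_nonneg (Real.exp_pos _).le (norm_nonneg _)) ?_ hsum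
    intro lam
    have hi1 : IntervalIntegrable (fun x => f x * Complex.exp (Complex.I * lam * x)) volume a b :=
      Stmt5Aux.integrable_mul_exp hf hab.le _
    have hi2 : IntervalIntegrable (fun x => f x * Complex.exp (Complex.I * (-lam) * x))
        volume a b := Stmt5Aux.integrable_mul_exp hf hab.le _
    have hcos : (∫ x in a..b, f x * Complex.cos (lam * x)) =
        ((∫ x in a..b, f x * Complex.exp (Complex.I * lam * x)) +
          ∫ x in a..b, f x * Complex.exp (Complex.I * (-lam) * x)) / 2 := by
      rw [← intervalIntegral.integral_add hi1 hi2, ← intervalIntegral.integral_div]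
      apply intervalIntegral.integral_congr
      intro x _
      show f x * Complex.cos (lam * x) =
        (f x * Complex.exp (Complex.I * lam * x) + f x * Complex.exp (Complex.I * (-lam) * x)) / 2
      rw [Complex.cos,
        show lam * (x:ℂ) * Complex.I = Complex.I * lam * (x:ℂ) by ring,
        show -(lam * (x:ℂ)) * Complex.I = Complex.I * (-lam) * (x:ℂ) by ring]
      ring
    rw [hcos, norm_div, h2]
    set A := ∫ x in a..b, f x * Complex.exp (Complex.I * lam * x)
    set B := ∫ x in a..b, f x * Complex.exp (Complex.I * (-lam) * x)
    have hAB : ‖A + B‖ ≤ ‖A‖ + ‖B‖ := norm_add_le _ _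
    have hE : (0:ℝ) ≤ Real.exp (-|lam.im| * max |a| |b|) := (Real.exp_pos _).le
    calc Real.exp (-|lam.im| * max |a| |b|) * (‖A + B‖ / 2)
        ≤ Real.exp (-|lam.im| * max |a| |b|) * ((‖A‖ + ‖B‖) / 2) := by
          apply mul_le_mul_of_nonneg_left _ hE
          linarith
      _ = (Real.exp (-|lam.im| * max |a| |b|) * ‖A‖ +
            Real.exp (-|lam.im| * max |a| |b|) * ‖B‖) / 2 := by ring
  · refine squeeze_zero (fun lam => mul_nonneg (Real.exp_pos _).le (norm_nonneg _)) ?_ hsum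
    intro lam
    have hi1 : IntervalIntegrable (fun x => f x * Complex.exp (Complex.I * lam * x)) volume a b :=
      Stmt5Aux.integrable_mul_exp hf hab.le _
    have hi2 : IntervalIntegrable (fun x => f x * Complex.exp (Complex.I * (-lam) * x))
        volume a b := Stmt5Aux.integrable_mul_exp hf hab.le _
    have hsin : (∫ x in a..b, f x * Complex.sin (lam * x)) =
        ((∫ x in a..b, f x * Complex.exp (Complex.I * (-lam) * x)) -
          ∫ x in a..b, f x * Complex.exp (Complex.I * lam * x)) * Complex.I / 2 := by
      rw [← intervalIntegral.integral_sub hi2 hi1, ← intervalIntegral.integral_mul_const,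
        ← intervalIntegral.integral_div]
      apply intervalIntegral.integral_congr
      intro x _
      show f x * Complex.sin (lam * x) =
        (f x * Complex.exp (Complex.I * (-lam) * x) - f x * Complex.exp (Complex.I * lam * x)) *
          Complex.I / 2
      rw [Complex.sin,
        show lam * (x:ℂ) * Complex.I = Complex.I * lam * (x:ℂ) by ring,
        show -(lam * (x:ℂ)) * Complex.I = Complex.I * (-lam) * (x:ℂ) by ring]
      ring
    rw [hsin, norm_div, norm_mul, Complex.norm_I, mul_one, h2]
    set A := ∫ x in a..b, f x * Complex.exp (Complex.I * lam * x)
    set B := ∫ x in a..b, f x * Complex.exp (Complex.I * (-lam) * x)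
    have hAB : ‖B - A‖ ≤ ‖A‖ + ‖B‖ := (norm_sub_le _ _).trans (le_of_eq (add_comm _ _))
    have hE : (0:ℝ) ≤ Real.exp (-|lam.im| * max |a| |b|) := (Real.exp_pos _).le
    calc Real.exp (-|lam.im| * max |a| |b|) * (‖B - A‖ / 2)
        ≤ Real.exp (-|lam.im| * max |a| |b|) * ((‖A‖ + ‖B‖) / 2) := by
          apply mul_le_mul_of_nonneg_left _ hE
          linarith
      _ = (Real.exp (-|lam.im| * max |a| |b|) * ‖A‖ +
            Real.exp (-|lam.im| * max |a| |b|) * ‖B‖) / 2 := by ring
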